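/- Let n be a positive integer, let 0 < p_out < p_in < 1, and let θ = η = 0 (no oracle, so S ≡ 0). Under the SSBM-with-oracle joint distribution, for every symmetric 0-1 adjacency matrix a (with zero diagonal) such that Pr(A = a) > 0, the set of maximizers over σ ∈ {−1,1}ⁿ of Pr(σ⁰ = σ | A = a) is equal to the set of minimizers over σ ∈ {−1,1}ⁿ of cut(C₁^σ, a) − τ·|C₁^σ|·(n − |C₁^σ|), where τ := log((1−p_out)/(1−p_in)) / log((p_in(1−p_out))/(p_out(1−p_in))). -/

import Mathlib

open Finset

noncomputable section

/-- Probability mass `Pr(σ⁰ = σ, A = a)` of the SSBM (no oracle): the ground truth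
`σ⁰ = σ` is uniform on `{−1,1}ⁿ` (encoded by `Bool`) and, given `σ⁰`, the edges are
independent Bernoulli with parameter `p_in` inside clusters and `p_out` across. -/
def graphMass (n : ℕ) (pin pout : ℝ) (σ : Fin n → Bool)
    (a : Fin n → Fin n → ℕ) : ℝ :=
  (1 / 2) ^ n *
    ∏ p ∈ Finset.univ.filter (fun p : Fin n × Fin n => p.1 < p.2),
      (if a p.1 p.2 = 1 then (if σ p.1 = σ p.2 then pin else pout)
        else (if σ p.1 = σ p.2 then 1 - pin else 1 - pout))

/-- Posterior probability `Pr(σ⁰ = σ | A = a)`, as a ratio of probabilities.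
(With `θ = η = 0` the oracle reveals nothing, `S ≡ 0`, so conditioning on the
graph alone is the same as conditioning on `(A, S)`.) -/
def posteriorGraph (n : ℕ) (pin pout : ℝ) (σ : Fin n → Bool)
    (a : Fin n → Fin n → ℕ) : ℝ :=
  graphMass n pin pout σ a / ∑ σ' : Fin n → Bool, graphMass n pin pout σ' a

/-- `cut(C₁^σ, a) = Σ_{i ∈ C₁^σ, j ∉ C₁^σ} a_{ij}`. -/
def cutVal (n : ℕ) (σ : Fin n → Bool) (a : Fin n → Fin n → ℕ) : ℝ :=
  ∑ i, ∑ j, (if σ i = true ∧ σ j = false then (a i j : ℝ) else 0)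

/-- The unsupervised MAP objective `cut(C₁^σ, a) − τ|C₁^σ|(n − |C₁^σ|)`. -/
def cutObjective (n : ℕ) (τ : ℝ) (σ : Fin n → Bool) (a : Fin n → Fin n → ℕ) : ℝ :=
  cutVal n σ a
    - τ * ((Finset.univ.filter (fun i => σ i = true)).card : ℝ)
        * ((n : ℝ) - ((Finset.univ.filter (fun i => σ i = true)).card : ℝ))

lemma sum_lt_diff_eq (n : ℕ) (σ : Fin n → Bool) (w : Fin n → Fin n → ℝ)
    (hw : ∀ i j, w i j = w j i) :
    ∑ p ∈ Finset.univ.filter (fun p : Fin n × Fin n => p.1 < p.2 ∧ σ p.1 ≠ σ p.2), w p.1 p.2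
    = ∑ p ∈ Finset.univ.filter
        (fun p : Fin n × Fin n => σ p.1 = true ∧ σ p.2 = false), w p.1 p.2 := by
  refine Finset.sum_nbij' (fun p => if σ p.1 = true then p else p.swap)
    (fun q => if q.1 < q.2 then q else q.swap) ?_ ?_ ?_ ?_ ?_
  · rintro ⟨i, j⟩ hp
    simp only [mem_filter, mem_univ, true_and] at hp ⊢
    obtain ⟨hlt, hne⟩ := hp
    by_cases h1 : σ i = true
    · rw [if_pos h1]
      exact ⟨h1, by simpa [h1] using hne.symm⟩
    · rw [if_neg h1]
      have h1' : σ i = false := by simpa using h1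
      exact ⟨by simpa [h1'] using hne, h1'⟩
  · rintro ⟨i, j⟩ hq
    simp only [mem_filter, mem_univ, true_and] at hq ⊢
    obtain ⟨h1, h2⟩ := hq
    have hne : i ≠ j := by rintro rfl; rw [h1] at h2; exact absurd h2 (by simp)
    by_cases hlt : i < j
    · simp [hlt, h1, h2]
    · have : j < i := lt_of_le_of_ne (not_lt.mp hlt) (Ne.symm hne)
      simp [hlt, this, h1, h2]
  · rintro ⟨i, j⟩ hp
    simp only [mem_filter, mem_univ, true_and] at hp
    obtain ⟨hlt, hne⟩ := hp
    by_cases h1 : σ i = true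
    · simp [h1, hlt]
    · simp [h1, not_lt.mpr hlt.le, not_lt_of_gt hlt]
  · rintro ⟨i, j⟩ hq
    simp only [mem_filter, mem_univ, true_and] at hq
    obtain ⟨h1, h2⟩ := hq
    by_cases hlt : i < j
    · simp [hlt, h1]
    · simp [hlt, h2]
  · rintro ⟨i, j⟩ hp
    by_cases h1 : σ i = true
    · simp [h1]
    · simp [h1, hw i j]

lemma cutVal_eq_sum_filter (n : ℕ) (σ : Fin n → Bool) (a : Fin n → Fin n → ℕ) :
    cutVal n σ a = ∑ p ∈ Finset.univ.filter
        (fun p : Fin n × Fin n => σ p.1 = true ∧ σ p.2 = false), (a p.1 p.2 : ℝ) := by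
  rw [cutVal, Finset.sum_filter, ← Fintype.sum_prod_type']

lemma card_cross (n : ℕ) (σ : Fin n → Bool) :
    ((Finset.univ.filter
        (fun p : Fin n × Fin n => σ p.1 = true ∧ σ p.2 = false)).card : ℝ)
      = ((Finset.univ.filter (fun i => σ i = true)).card : ℝ) *
        ((n : ℝ) - ((Finset.univ.filter (fun i => σ i = true)).card : ℝ)) := by
  rw [← Finset.univ_product_univ,
    Finset.filter_product (fun i => σ i = true) (fun i => σ i = false),
    Finset.card_product]
  have h2 : (Finset.univ.filter (fun i => σ i = false)).card
      = n - (Finset.univ.filter (fun i => σ i = true)).card := by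
    have := Finset.card_filter_add_card_filter_not
      (s := (Finset.univ : Finset (Fin n))) (p := fun i => σ i = true)
    have he : Finset.univ.filter (fun i => ¬ σ i = true)
        = Finset.univ.filter (fun i => σ i = false) := by
      apply Finset.filter_congr; intro i _; simp
    rw [he] at this
    simp only [Finset.card_univ, Fintype.card_fin] at this
    omega
  have hk : (Finset.univ.filter (fun i => σ i = true)).card ≤ n := by
    simpa using Finset.card_filter_le Finset.univ (fun i => σ i = true)
  rw [h2]
  push_cast [Nat.cast_sub hk]
  ring

lemma graphMass_formula (n : ℕ) (pin pout : ℝ)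
    (hpout : 0 < pout) (hp : pout < pin) (hpin : pin < 1)
    (a : Fin n → Fin n → ℕ) (ha01 : ∀ i j, a i j = 0 ∨ a i j = 1)
    (hasym : ∀ i j, a i j = a j i) :
    ∃ C : ℝ, 0 < C ∧ ∀ σ : Fin n → Bool,
      graphMass n pin pout σ a =
        C * Real.exp (-(Real.log (pin / pout) - Real.log ((1 - pin) / (1 - pout))) *
          cutObjective n
            (Real.log ((1 - pout) / (1 - pin)) /
              Real.log ((pin * (1 - pout)) / (pout * (1 - pin)))) σ a) := by
  have hpin0 : 0 < pin := hpout.trans hp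
  have h1pin : 0 < 1 - pin := by linarith
  have h1pout : 0 < 1 - pout := by linarith
  set c1 : ℝ := Real.log (pin / pout) with hc1def
  set c0 : ℝ := Real.log ((1 - pin) / (1 - pout)) with hc0def
  set P := Finset.univ.filter (fun p : Fin n × Fin n => p.1 < p.2) with hP
  refine ⟨(1 / 2 : ℝ) ^ n * (∏ p ∈ P, (if a p.1 p.2 = 1 then pout else 1 - pout)) *
      Real.exp (∑ p ∈ P, (if a p.1 p.2 = 1 then c1 else c0)), ?_, ?_⟩
  · apply mul_pos (mul_pos (by positivity) (Finset.prod_pos ?_)) (Real.exp_pos _)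
    intro p _
    split_ifs <;> linarith
  intro σ
  -- basic log facts
  have hLden : Real.log ((pin * (1 - pout)) / (pout * (1 - pin))) = c1 - c0 := by
    rw [show (pin * (1 - pout)) / (pout * (1 - pin))
        = (pin / pout) / ((1 - pin) / (1 - pout)) by field_simp]
    rw [Real.log_div (by positivity) (by positivity)]
  have hnum : Real.log ((1 - pout) / (1 - pin)) = -c0 := by
    rw [hc0def, show (1 - pout) / (1 - pin) = ((1 - pin) / (1 - pout))⁻¹ by rw [inv_div],
      Real.log_inv]
  have hc1pos : 0 < c1 := Real.log_pos ((one_lt_div hpout).mpr hp)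
  have hc0neg : c0 < 0 := Real.log_neg (by positivity) ((div_lt_one h1pout).mpr (by linarith))
  have hτ : (Real.log ((1 - pout) / (1 - pin)) /
      Real.log ((pin * (1 - pout)) / (pout * (1 - pin)))) * (c1 - c0) = -c0 := by
    have hLne : c1 - c0 ≠ 0 := ne_of_gt (by linarith)
    rw [hnum, hLden, div_mul_cancel₀ _ hLne]
  -- pointwise factorization of each edge term
  have hterm : ∀ p ∈ P,
      (if a p.1 p.2 = 1 then (if σ p.1 = σ p.2 then pin else pout)
        else (if σ p.1 = σ p.2 then 1 - pin else 1 - pout))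
      = (if a p.1 p.2 = 1 then pout else 1 - pout) *
        Real.exp (if σ p.1 = σ p.2 then (if a p.1 p.2 = 1 then c1 else c0) else 0) := by
    intro p _
    by_cases hs : σ p.1 = σ p.2 <;> by_cases ha : a p.1 p.2 = 1 <;>
      simp only [hs, ha, if_true, if_false, Real.exp_zero, mul_one, hc1def, hc0def]
    · rw [Real.exp_log (by positivity)]; field_simp
    · rw [Real.exp_log (by positivity)]; field_simp
  rw [graphMass, ← hP, Finset.prod_congr rfl hterm, Finset.prod_mul_distrib, ← Real.exp_sum]
  -- the exponent sum
  set k : ℝ := ((Finset.univ.filter (fun i => σ i = true)).card : ℝ) with hk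
  have hsum : ∑ p ∈ P, (if σ p.1 = σ p.2 then (if a p.1 p.2 = 1 then c1 else c0) else 0)
      = (∑ p ∈ P, (if a p.1 p.2 = 1 then c1 else c0))
        - (c1 * cutVal n σ a + c0 * (k * ((n : ℝ) - k) - cutVal n σ a)) := by
    have hsplit : ∀ p ∈ P,
        (if σ p.1 = σ p.2 then (if a p.1 p.2 = 1 then c1 else c0) else 0)
        = (if a p.1 p.2 = 1 then c1 else c0)
          - (if σ p.1 ≠ σ p.2 then (if a p.1 p.2 = 1 then c1 else c0) else 0) := by
      intro p _
      by_cases hs : σ p.1 = σ p.2 <;> simp [hs]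
    rw [Finset.sum_congr rfl hsplit, Finset.sum_sub_distrib]
    congr 1
    rw [← Finset.sum_filter, hP, Finset.filter_filter]
    rw [sum_lt_diff_eq n σ (fun i j => if a i j = 1 then c1 else c0)
      (fun i j => by simp only [hasym i j])]
    rw [Finset.sum_congr rfl (fun p _ => show (if a p.1 p.2 = 1 then c1 else c0)
        = c1 * (a p.1 p.2 : ℝ) + c0 * (1 - (a p.1 p.2 : ℝ)) by
      rcases ha01 p.1 p.2 with h | h <;> simp [h])]
    rw [Finset.sum_add_distrib, ← Finset.mul_sum, ← Finset.mul_sum,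
      Finset.sum_sub_distrib, Finset.sum_const, nsmul_eq_mul, mul_one,
      ← cutVal_eq_sum_filter, card_cross]
  have hX : -(c1 * cutVal n σ a + c0 * (k * ((n : ℝ) - k) - cutVal n σ a))
      = -(c1 - c0) * cutObjective n
          (Real.log ((1 - pout) / (1 - pin)) /
            Real.log ((pin * (1 - pout)) / (pout * (1 - pin)))) σ a := by
    rw [cutObjective, ← hk]
    linear_combination (-(k * ((n : ℝ) - k))) * hτ
  have hX2 : (∑ p ∈ P, (if a p.1 p.2 = 1 then c1 else c0))
        - (c1 * cutVal n σ a + c0 * (k * ((n : ℝ) - k) - cutVal n σ a))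
      = (∑ p ∈ P, (if a p.1 p.2 = 1 then c1 else c0))
        + (-(c1 - c0) * cutObjective n
            (Real.log ((1 - pout) / (1 - pin)) /
              Real.log ((pin * (1 - pout)) / (pout * (1 - pin)))) σ a) := by
    rw [← hX]; ring
  rw [hsum, hX2, Real.exp_add]
  ring

/-- **Theorem 1, unsupervised case (`θ = η = 0`).** The maximizers of
`Pr(σ⁰ = σ | A = a)` are exactly the minimizers of
`cut(C₁^σ, a) − τ|C₁^σ|(n − |C₁^σ|)` over `σ ∈ {−1,1}ⁿ`, with
`τ = log((1−p_out)/(1−p_in)) / log(p_in(1−p_out)/(p_out(1−p_in)))`. -/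
theorem map_estimator_unsupervised
    (n : ℕ) (hn : 0 < n) (pin pout : ℝ)
    (hpout : 0 < pout) (hp : pout < pin) (hpin : pin < 1)
    (a : Fin n → Fin n → ℕ)
    (ha01 : ∀ i j, a i j = 0 ∨ a i j = 1)
    (hasym : ∀ i j, a i j = a j i)
    (hadiag : ∀ i, a i i = 0)
    (hpos : 0 < ∑ σ : Fin n → Bool, graphMass n pin pout σ a) :
    {σ : Fin n → Bool | ∀ σ' : Fin n → Bool,
        posteriorGraph n pin pout σ' a ≤ posteriorGraph n pin pout σ a}
      =
    {σ : Fin n → Bool | ∀ σ' : Fin n → Bool,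
        cutObjective n
            (Real.log ((1 - pout) / (1 - pin)) /
              Real.log ((pin * (1 - pout)) / (pout * (1 - pin))))
            σ a
          ≤ cutObjective n
            (Real.log ((1 - pout) / (1 - pin)) /
              Real.log ((pin * (1 - pout)) / (pout * (1 - pin))))
            σ' a} := by
  obtain ⟨C, hC, hmass⟩ := graphMass_formula n pin pout hpout hp hpin a ha01 hasym
  have hpin0 : 0 < pin := hpout.trans hp
  have h1pin : 0 < 1 - pin := by linarith
  have h1pout : 0 < 1 - pout := by linarith
  have hc1pos : 0 < Real.log (pin / pout) := Real.log_pos ((one_lt_div hpout).mpr hp)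
  have hc0neg : Real.log ((1 - pin) / (1 - pout)) < 0 :=
    Real.log_neg (by positivity) ((div_lt_one h1pout).mpr (by linarith))
  have hLpos : 0 < Real.log (pin / pout) - Real.log ((1 - pin) / (1 - pout)) := by linarith
  have key : ∀ σ σ' : Fin n → Bool,
      posteriorGraph n pin pout σ' a ≤ posteriorGraph n pin pout σ a ↔
        cutObjective n
            (Real.log ((1 - pout) / (1 - pin)) /
              Real.log ((pin * (1 - pout)) / (pout * (1 - pin)))) σ a
          ≤ cutObjective n
            (Real.log ((1 - pout) / (1 - pin)) /
              Real.log ((pin * (1 - pout)) / (pout * (1 - pin)))) σ' a := by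
    intro σ σ'
    rw [posteriorGraph, posteriorGraph, div_le_div_iff_of_pos_right hpos,
      hmass σ, hmass σ', mul_le_mul_iff_right₀ hC, Real.exp_le_exp, neg_mul, neg_mul,
      neg_le_neg_iff, mul_le_mul_iff_right₀ hLpos]
  ext σ
  simp only [Set.mem_setOf_eq]
  exact ⟨fun h σ' => (key σ σ').mp (h σ'), fun h σ' => (key σ σ').mpr (h σ')⟩

end
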